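/- Dichotomy lemma: assume additionally that S is 2d-Calabi–Yau, i.e. Hom_S(s,s') ≅ D Hom_S(s', (Σ^d)² s) naturally, where D is k-linear duality. Let s_0, s_{d+1} be indecomposable objects of S with dim_k Hom_S(s_0, Σ^d s_{d+1}) = 1 (an exchange pair), with ensuing (d+2)-angles s_{d+1} → x_d → ⋯ → x_1 → s_0 →γ₀ Σ^d s_{d+1} and s_0 → y_1 → ⋯ → y_d → s_{d+1} →γ_{d+1} Σ^d s_0, both with nonzero final morphism. Then Fγ₀ = 0 or Fγ_{d+1} = 0, where F = Hom_S(t,−) and t is an Oppermann–Thomas cluster tilting object of S. -/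
import Mathlib


open CategoryTheory Category Limits Pretriangulated Opposite

universe v u

section Defs

variable {C : Type u} [Category.{v} C]

section Add

variable [Preadditive C] [HasFiniteBiproducts C]

/-- `x` lies in `add t`: it is a direct summand of a finite direct sum of copies of `t`. -/
def inAdd (t x : C) : Prop :=
  ∃ (n : ℕ) (i : x ⟶ ⨁ (fun _ : Fin n => t)) (r : ⨁ (fun _ : Fin n => t) ⟶ x),
    i ≫ r = 𝟙 x

end Add

/-- A morphism lies in the radical of the category. -/
def radMor [Preadditive C] {x y : C} (f : x ⟶ y) : Prop :=
  ∀ g : y ⟶ x, IsIso (𝟙 x - f ≫ g)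

/-- An object is indecomposable. -/
def IndecObj [Preadditive C] [HasBinaryBiproducts C] (s : C) : Prop :=
  ¬ IsZero s ∧ ∀ (a b : C), (s ≅ a ⊞ b) → IsZero a ∨ IsZero b

/-- Every object has a precover by an object of `Tset` (contravariant finiteness). -/
def IsPrecovering (Tset : Set C) : Prop :=
  ∀ c : C, ∃ (x : C) (f : x ⟶ c), x ∈ Tset ∧
    ∀ x' ∈ Tset, ∀ g : x' ⟶ c, ∃ h : x' ⟶ x, h ≫ f = g

/-- Every object has a preenvelope by an object of `Tset` (covariant finiteness). -/
def IsPreenveloping (Tset : Set C) : Prop :=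
  ∀ c : C, ∃ (x : C) (f : c ⟶ x), x ∈ Tset ∧
    ∀ x' ∈ Tset, ∀ g : c ⟶ x', ∃ h : x ⟶ x', f ≫ h = g

/-- `f : x ⟶ c` is a `Tset`-cover: a right minimal `Tset`-approximation. -/
def IsTCover (Tset : Set C) {x c : C} (f : x ⟶ c) : Prop :=
  x ∈ Tset ∧ (∀ x' ∈ Tset, ∀ g : x' ⟶ c, ∃ h : x' ⟶ x, h ≫ f = g) ∧
    ∀ φ : x ⟶ x, φ ≫ f = f → IsIso φ

section Shift

variable [Preadditive C] [HasShift C ℤ]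

/-- `Tset` is an `n`-cluster tilting subcategory: it is functorially finite and coincides with
both `Ext^{1..n-1}`-orthogonals of itself. -/
structure IsClusterTiltingSub (n : ℕ) (Tset : Set C) : Prop where
  precovering : IsPrecovering Tset
  preenveloping : IsPreenveloping Tset
  mem_iff_ext₁ : ∀ c : C, c ∈ Tset ↔
    ∀ i : ℕ, 1 ≤ i → i ≤ n - 1 → ∀ x ∈ Tset, ∀ f : x ⟶ c⟦(i : ℤ)⟧, f = 0
  mem_iff_ext₂ : ∀ c : C, c ∈ Tset ↔
    ∀ i : ℕ, 1 ≤ i → i ≤ n - 1 → ∀ x ∈ Tset, ∀ f : c ⟶ x⟦(i : ℤ)⟧, f = 0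

/-- `t` is an `n`-cluster tilting object: `add t` is an `n`-cluster tilting subcategory. -/
def IsClusterTiltingObj [HasFiniteBiproducts C] (n : ℕ) (t : C) : Prop :=
  IsClusterTiltingSub n {x : C | inAdd t x}

end Shift

section Tri

variable [Preadditive C] [HasZeroObject C] [HasShift C ℤ]
  [∀ n : ℤ, (shiftFunctor C n).Additive] [Pretriangulated C]

/-- The Iyama–Yoshino star operation `X * Y` on full subcategories. -/
def star (X Y : Set C) : Set C :=
  {c | ∃ (x y : C) (f : x ⟶ c) (g : c ⟶ y) (h : y ⟶ x⟦(1 : ℤ)⟧),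
    Triangle.mk f g h ∈ (distTriang C) ∧ x ∈ X ∧ y ∈ Y}

/-- Iterated star operation `X₁ * X₂ * ⋯ * Xₘ`. -/
def starList : List (Set C) → Set C
  | [] => {c | IsZero c}
  | [X] => X
  | X :: Y :: L => star X (starList (Y :: L))

/-- A tower of triangles connecting the objects `cobj (m+1), cobj m, …, cobj 1, cobj 0`:
triangles `w (i+1) ⟶ cobj (i+1) ⟶ w i ⟶ (w (i+1))⟦1⟧` for `i < m`, with
`w 0 = cobj 0` and `w m = cobj (m+1)`. -/
structure TriTower (m : ℕ) (cobj : ℕ → C) where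
  w : ℕ → C
  fmor : ∀ i : ℕ, w (i + 1) ⟶ cobj (i + 1)
  gmor : ∀ i : ℕ, cobj (i + 1) ⟶ w i
  hmor : ∀ i : ℕ, w i ⟶ (w (i + 1))⟦(1 : ℤ)⟧
  mem : ∀ i < m, Triangle.mk (fmor i) (gmor i) (hmor i) ∈ distTriang C
  w_zero : w 0 = cobj 0
  w_top : w m = cobj (m + 1)

/-- The composite `w 0 ⟶ Σʲ (w j)` of the (suitably shifted) wavy morphisms of a tower. -/
noncomputable def towerComp {m : ℕ} {cobj : ℕ → C} (tw : TriTower m cobj) :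
    ∀ j : ℕ, (tw.w 0 ⟶ (tw.w j)⟦(j : ℤ)⟧)
  | 0 => (shiftFunctorZero' C ((0 : ℕ) : ℤ) (by simp)).inv.app (tw.w 0)
  | (j + 1) => towerComp tw j ≫ (shiftFunctor C (j : ℤ)).map (tw.hmor j) ≫
      (shiftFunctorAdd' C (1 : ℤ) (j : ℤ) ((j + 1 : ℕ) : ℤ) (by push_cast; ring)).inv.app
        (tw.w (j + 1))

/-- The full composite `cobj 0 ⟶ Σᵐ (cobj (m+1))` of the wavy morphisms of a tower. -/
noncomputable def towerGamma {m : ℕ} {cobj : ℕ → C} (tw : TriTower m cobj) :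
    cobj 0 ⟶ (cobj (m + 1))⟦(m : ℤ)⟧ :=
  eqToHom tw.w_zero.symm ≫ towerComp tw m ≫ eqToHom (by rw [tw.w_top])

/-- `cls` is constant on isomorphism classes of objects of `Tset` and additive on biproducts
of objects of `Tset`; quantifying over all such `cls` encodes identities in the split
Grothendieck group `K₀^{sp}(Tset)`. -/
def IsAddOn [HasFiniteBiproducts C] (Tset : Set C) {G : Type*} [AddCommGroup G]
    (cls : C → G) : Prop :=
  (∀ x y : C, x ∈ Tset → y ∈ Tset → Nonempty (x ≅ y) → cls x = cls y) ∧
  (∀ x y : C, x ∈ Tset → y ∈ Tset → cls (x ⊞ y) = cls x + cls y)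

/-- `ind` is the triangulated index with respect to `Tset`: for each `c` there is a tower of
triangles built from `Tset`-covers, and `ind c` is the alternating sum of the classes of its
`Tset`-objects. -/
def IsIndex [HasFiniteBiproducts C] (n : ℕ) (Tset : Set C) {G : Type*} [AddCommGroup G]
    (cls ind : C → G) : Prop :=
  ∀ c : C, ∃ (cobj : ℕ → C) (tw : TriTower (n - 1) cobj),
    cobj 0 = c ∧ (∀ i < n - 1, IsTCover Tset (tw.gmor i)) ∧ cobj n ∈ Tset ∧
    ind c = ∑ i ∈ Finset.range n, ((-1 : ℤ) ^ i) • cls (cobj (i + 1))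

/-- `ind` is the `(d+2)`-angulated index with respect to `Tset`: for each `s ∈ Sset` there is a
`(d+2)`-angle (encoded as a tower of triangles) `t_d → ⋯ → t_0 → s → Σ^d t_d` with `t_i ∈ Tset`
and radical maps, and `ind s` is the alternating sum of the classes of the `t_i`. -/
def IsHigherIndex [HasFiniteBiproducts C] (d : ℕ) (Tset Sset : Set C) {G : Type*}
    [AddCommGroup G] (cls ind : C → G) : Prop :=
  ∀ s ∈ Sset, ∃ (cobj : ℕ → C) (tw : TriTower d cobj),
    cobj 0 = s ∧ (∀ i, 1 ≤ i → i ≤ d + 1 → cobj i ∈ Tset) ∧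
    (∀ j : ℕ, j + 2 ≤ d → radMor (tw.gmor (j + 1) ≫ tw.fmor j)) ∧
    (∀ j : ℕ, (hj : j + 1 = d) →
      radMor ((eqToHom (show cobj (d + 1) = tw.w (j + 1) by rw [hj, tw.w_top]) :
        cobj (d + 1) ⟶ tw.w (j + 1)) ≫ tw.fmor j)) ∧
    ind s = ∑ i ∈ Finset.range (d + 1), ((-1 : ℤ) ^ i) • cls (cobj (i + 1))

/-- `t` is an Oppermann–Thomas cluster tilting object of the `(d+2)`-angulated category `Sset`:
`Hom(t, Σ^d t) = 0`, and every `s ∈ Sset` admits a `(d+2)`-angle (encoded as a tower)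
`t_d → ⋯ → t_0 → s → Σ^d t_d` with all `t_i ∈ add t`. -/
def IsOTClusterTilting [HasFiniteBiproducts C] (d : ℕ) (Sset : Set C) (t : C) : Prop :=
  t ∈ Sset ∧ (∀ f : t ⟶ t⟦(d : ℤ)⟧, f = 0) ∧
    ∀ s ∈ Sset, ∃ (cobj : ℕ → C) (tw : TriTower d cobj),
      cobj 0 = s ∧ ∀ i, 1 ≤ i → i ≤ d + 1 → inAdd t (cobj i)

/-- A `N`-Calabi–Yau structure on `Sset`: a bifunctorial perfect pairing
`Hom(x,y) × Hom(y, x⟦N⟧) → k`, encoding natural isomorphisms `Hom(x,y) ≅ D Hom(y, x⟦N⟧)`. -/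
structure CYData (k : Type*) [Field k] [Linear k C] (Sset : Set C) (N : ℤ) where
  pair : ∀ x y : C, (x ⟶ y) → (y ⟶ x⟦N⟧) → k
  add_left : ∀ x y, x ∈ Sset → y ∈ Sset → ∀ (f f' : x ⟶ y) (g : y ⟶ x⟦N⟧),
    pair x y (f + f') g = pair x y f g + pair x y f' g
  add_right : ∀ x y, x ∈ Sset → y ∈ Sset → ∀ (f : x ⟶ y) (g g' : y ⟶ x⟦N⟧),
    pair x y f (g + g') = pair x y f g + pair x y f g'
  smul_left : ∀ x y, x ∈ Sset → y ∈ Sset → ∀ (a : k) (f : x ⟶ y) (g : y ⟶ x⟦N⟧),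
    pair x y (a • f) g = a * pair x y f g
  smul_right : ∀ x y, x ∈ Sset → y ∈ Sset → ∀ (a : k) (f : x ⟶ y) (g : y ⟶ x⟦N⟧),
    pair x y f (a • g) = a * pair x y f g
  assoc : ∀ x y z, x ∈ Sset → y ∈ Sset → z ∈ Sset →
    ∀ (f : x ⟶ y) (g : y ⟶ z) (h : z ⟶ x⟦N⟧),
    pair x z (f ≫ g) h = pair x y f (g ≫ h)
  nondeg_left : ∀ x y, x ∈ Sset → y ∈ Sset → ∀ f : x ⟶ y,
    (∀ g : y ⟶ x⟦N⟧, pair x y f g = 0) → f = 0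
  nondeg_right : ∀ x y, x ∈ Sset → y ∈ Sset → ∀ g : y ⟶ x⟦N⟧,
    (∀ f : x ⟶ y, pair x y f g = 0) → g = 0

end Tri

end Defs

variable {C : Type u} [Category.{v} C]

theorem stmt17 (k : Type*) [Field k] [Preadditive C] [CategoryTheory.Linear k C] [HasZeroObject C]
    [HasShift C ℤ] [∀ n : ℤ, (shiftFunctor C n).Additive] [Pretriangulated C]
    [HasFiniteBiproducts C] [IsIdempotentComplete C]
    [∀ X Y : C, FiniteDimensional k (X ⟶ Y)]
    (d : ℕ) (hd : 1 ≤ d) (t : C) (ht : IsClusterTiltingObj (2 * d) t)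
    (Sset : Set C) (hS : IsClusterTiltingSub d Sset)
    (hSshift : ∀ s : C, s ∈ Sset ↔ s⟦(d : ℤ)⟧ ∈ Sset) (htS : t ∈ Sset)
    (hOT : IsOTClusterTilting d Sset t)
    (cy : CYData k Sset (2 * (d : ℤ)))
    (s0 sd1 : C) (hs0 : s0 ∈ Sset) (hsd1 : sd1 ∈ Sset)
    (hi0 : IndecObj s0) (hid1 : IndecObj sd1)
    (hdim : Module.finrank k (s0 ⟶ sd1⟦(d : ℤ)⟧) = 1)
    (cobj cobj' : ℕ → C) (tw : TriTower d cobj) (tw' : TriTower d cobj')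
    (hc0 : cobj 0 = s0) (hctop : cobj (d + 1) = sd1)
    (hc0' : cobj' 0 = sd1) (hctop' : cobj' (d + 1) = s0)
    (hcS : ∀ i, i ≤ d + 1 → cobj i ∈ Sset) (hcS' : ∀ i, i ≤ d + 1 → cobj' i ∈ Sset)
    (hγ0 : towerGamma tw ≠ 0) (hγd1 : towerGamma tw' ≠ 0) :
    (∀ u : t ⟶ cobj 0, u ≫ towerGamma tw = 0) ∨
      (∀ u : t ⟶ cobj' 0, u ≫ towerGamma tw' = 0) := by
  subst hc0
  subst hctop
  by_contra hcon
  push_neg at hcon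
  obtain ⟨⟨u, hu⟩, τ0, hτ0⟩ := hcon
  have ha : cobj 0 ∈ Sset := hcS 0 (Nat.zero_le _)
  have hb : cobj (d + 1) ∈ Sset := hcS (d + 1) le_rfl
  have htd : t⟦(d : ℤ)⟧ ∈ Sset := (hSshift t).mp htS
  have hbd : (cobj (d + 1))⟦(d : ℤ)⟧ ∈ Sset := (hSshift _).mp hb
  have e2 : (cobj' (d + 1))⟦(d : ℤ)⟧ = (cobj 0)⟦(d : ℤ)⟧ := by rw [hctop']
  set γ₀ : cobj 0 ⟶ (cobj (d + 1))⟦(d : ℤ)⟧ := towerGamma tw with hγ₀def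
  set γ'' : cobj (d + 1) ⟶ (cobj 0)⟦(d : ℤ)⟧ :=
    eqToHom hc0'.symm ≫ towerGamma tw' ≫ eqToHom e2 with hγ''def
  set τ : t ⟶ cobj (d + 1) := τ0 ≫ eqToHom hc0' with hτdef
  have hτγ : τ ≫ γ'' ≠ 0 := by
    intro h
    apply hτ0
    have h2 : τ0 ≫ towerGamma tw' ≫ eqToHom e2 = 0 := by
      simpa [hτdef, hγ''def] using h
    have h3 := congrArg (fun f => f ≫ eqToHom e2.symm) h2
    simpa using h3
  set ιI : ((cobj 0)⟦(d : ℤ)⟧)⟦(d : ℤ)⟧ ≅ (cobj 0)⟦(2 * (d : ℤ))⟧ :=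
    ((shiftFunctorAdd' C (d : ℤ) (d : ℤ) (2 * (d : ℤ)) (by ring)).symm.app (cobj 0)) with hιdef
  set β' : t⟦(d : ℤ)⟧ ⟶ (cobj 0)⟦(2 * (d : ℤ))⟧ :=
    (shiftFunctor C (d : ℤ)).map τ ≫ (shiftFunctor C (d : ℤ)).map γ'' ≫ ιI.hom with hβ'def
  have hβ'ne : β' ≠ 0 := by
    intro h
    apply hτγ
    apply (shiftFunctor C (d : ℤ)).map_injective
    rw [Functor.map_comp, Functor.map_zero]
    have h4 : (shiftFunctor C (d : ℤ)).map τ ≫ (shiftFunctor C (d : ℤ)).map γ''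
        = β' ≫ ιI.inv := by
      rw [hβ'def]; simp
    rw [h4, h, zero_comp]
  obtain ⟨φ, hφ⟩ : ∃ φ : cobj 0 ⟶ t⟦(d : ℤ)⟧, cy.pair _ _ φ β' ≠ 0 := by
    by_contra h
    push_neg at h
    exact hβ'ne (cy.nondeg_right _ _ ha htd β' h)
  have hassoc := cy.assoc (cobj 0) (t⟦(d : ℤ)⟧) ((cobj (d + 1))⟦(d : ℤ)⟧) ha htd hbd
    φ ((shiftFunctor C (d : ℤ)).map τ) ((shiftFunctor C (d : ℤ)).map γ'' ≫ ιI.hom)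
  set ε : cobj 0 ⟶ (cobj (d + 1))⟦(d : ℤ)⟧ := φ ≫ (shiftFunctor C (d : ℤ)).map τ with hεdef
  have hpairε : cy.pair _ _ ε ((shiftFunctor C (d : ℤ)).map γ'' ≫ ιI.hom) ≠ 0 := by
    rw [hassoc]
    simpa [hβ'def] using hφ
  have hεne : ε ≠ 0 := by
    intro h
    apply hpairε
    have h5 := cy.smul_left (cobj 0) ((cobj (d + 1))⟦(d : ℤ)⟧) ha hbd 0
      (0 : cobj 0 ⟶ (cobj (d + 1))⟦(d : ℤ)⟧) ((shiftFunctor C (d : ℤ)).map γ'' ≫ ιI.hom)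
    rw [h]
    simpa using h5
  have hγ₀ne : γ₀ ≠ 0 := fun h => hu (by rw [h, comp_zero])
  have hspan : Submodule.span k {γ₀} = ⊤ :=
    Submodule.eq_top_of_finrank_eq (by rw [finrank_span_singleton hγ₀ne, hdim])
  have hmem : ε ∈ Submodule.span k {γ₀} := hspan ▸ Submodule.mem_top
  obtain ⟨c, hc⟩ := Submodule.mem_span_singleton.mp hmem
  have huφ : u ≫ φ = 0 := hOT.2.1 (u ≫ φ)
  have huε : u ≫ ε = 0 := by rw [hεdef, ← Category.assoc, huφ, zero_comp]
  rw [← hc, Linear.comp_smul, smul_eq_zero] at huε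
  rcases huε with h | h
  · exact hεne (by rw [← hc, h, zero_smul])
  · exact hu h
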